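/- There exists a universal constant C > 0 such that the following holds for all natural numbers m ≥ 1 and n, every matrix B ∈ (ZMod 2)^{m×n}, and every real t > 0. Define g*(v) := max over z ∈ (ZMod 2)^n of (m − wt(B·z + v)) for v ∈ (ZMod 2)^m, and let μ := 2^{−m} · ∑_{v ∈ (ZMod 2)^m} g*(v) be its average over the uniform distribution. Then the number of v ∈ (ZMod 2)^m with |g*(v) − μ| ≥ t·m is at most 2^{m+1} · exp(−C·m·t²). -/

import Mathlib

open scoped Classical

/-- The Hamming weight of a vector over `ZMod 2`: the number of coordinates equal to `1`. -/
def hwt {m : ℕ} (v : Fin m → ZMod 2) : ℕ :=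
  (Finset.univ.filter fun i => v i = 1).card

/-- The maximum number of satisfied clauses of the MAX-XOR-SAT instance `(B, v)`:
`g*(v) = max_z (m - wt(B·z + v))`. -/
noncomputable def gstar {m n : ℕ} (B : Matrix (Fin m) (Fin n) (ZMod 2))
    (v : Fin m → ZMod 2) : ℝ :=
  Finset.univ.sup' Finset.univ_nonempty
    (fun z : Fin n → ZMod 2 => (m : ℝ) - hwt (B.mulVec z + v))

/-- The average of `g*` over uniformly random `v`: `μ = 2^{-m} ∑_v g*(v)`. -/
noncomputable def gstarMean {m n : ℕ} (B : Matrix (Fin m) (Fin n) (ZMod 2)) : ℝ :=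
  (2 : ℝ) ^ (-(m : ℤ)) * ∑ v : Fin m → ZMod 2, gstar B v

lemma hwt_le {m : ℕ} (v w : Fin m → ZMod 2) (i : Fin m)
    (h : ∀ j, j ≠ i → v j = w j) : hwt v ≤ hwt w + 1 := by
  unfold hwt
  set A := Finset.univ.filter fun j => v j = 1
  set B := Finset.univ.filter fun j => w j = 1
  have hAB : A.erase i = B.erase i := by
    ext j
    simp only [Finset.mem_erase, A, B, Finset.mem_filter, Finset.mem_univ, true_and]
    constructor
    · rintro ⟨hj, hv⟩; exact ⟨hj, by rw [← h j hj]; exact hv⟩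
    · rintro ⟨hj, hv⟩; exact ⟨hj, by rw [h j hj]; exact hv⟩
  calc A.card ≤ (insert i (A.erase i)).card := Finset.card_le_card (fun j hj => by
        by_cases hji : j = i
        · simp [hji]
        · exact Finset.mem_insert_of_mem (Finset.mem_erase.2 ⟨hji, hj⟩))
    _ ≤ (A.erase i).card + 1 := Finset.card_insert_le _ _
    _ = (B.erase i).card + 1 := by rw [hAB]
    _ ≤ B.card + 1 := Nat.add_le_add_right (Finset.card_le_card (Finset.erase_subset _ _)) 1


lemma gstar_lip {m n : ℕ} (B : Matrix (Fin m) (Fin n) (ZMod 2))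
    (v : Fin m → ZMod 2) (i : Fin m) (b : ZMod 2) :
    |gstar B (Function.update v i b) - gstar B v| ≤ 1 := by
  have hpt : ∀ (u w : Fin m → ZMod 2), (∀ j, j ≠ i → u j = w j) →
      ∀ z : Fin n → ZMod 2,
        ((m : ℝ) - hwt (B.mulVec z + u)) ≤ ((m : ℝ) - hwt (B.mulVec z + w)) + 1 := by
    intro u w huw z
    have := hwt_le (B.mulVec z + w) (B.mulVec z + u) i (fun j hj => by
      show B.mulVec z j + w j = B.mulVec z j + u j
      rw [huw j hj])
    have hc : (hwt (B.mulVec z + w) : ℝ) ≤ (hwt (B.mulVec z + u) : ℝ) + 1 := by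
      exact_mod_cast this
    linarith
  have hsup : ∀ (u w : Fin m → ZMod 2), (∀ j, j ≠ i → u j = w j) →
      gstar B u ≤ gstar B w + 1 := by
    intro u w huw
    apply Finset.sup'_le
    intro z _
    calc (m : ℝ) - hwt (B.mulVec z + u) ≤ ((m : ℝ) - hwt (B.mulVec z + w)) + 1 := hpt u w huw z
      _ ≤ gstar B w + 1 := by
          have := Finset.le_sup' (fun z : Fin n → ZMod 2 => (m : ℝ) - hwt (B.mulVec z + w))
            (Finset.mem_univ z)
          exact add_le_add this (le_refl 1)
  have h1 := hsup (Function.update v i b) v (fun j hj => Function.update_of_ne hj _ _)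
  have h2 := hsup v (Function.update v i b) (fun j hj => (Function.update_of_ne hj _ _).symm)
  rw [abs_sub_le_iff]
  constructor <;> linarith


lemma mgf_bound : ∀ (m : ℕ) (f : (Fin m → ZMod 2) → ℝ),
    (∀ v (i : Fin m) b, |f (Function.update v i b) - f v| ≤ 1) → ∀ L : ℝ,
    ∑ v, Real.exp (L * f v) ≤
      2 ^ m * Real.exp (L * ((∑ v, f v) / 2 ^ m) + L ^ 2 * m / 8) := by
  intro m
  induction m with
  | zero =>
      intro f _ L
      rw [Fintype.sum_unique, Fintype.sum_unique]
      simp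
  | succ m ih =>
      intro f hf L
      set g : (Fin m → ZMod 2) → ℝ :=
        fun v' => (f (Fin.cons 0 v') + f (Fin.cons 1 v')) / 2 with hg
      have hdiff : ∀ v', |f (Fin.cons 0 v') - f (Fin.cons 1 v')| ≤ 1 := by
        intro v'
        have := hf (Fin.cons 1 v') 0 0
        rwa [Fin.update_cons_zero] at this
      have hgl : ∀ v' (i : Fin m) b, |g (Function.update v' i b) - g v'| ≤ 1 := by
        intro v' i b
        have h0 := hf (Fin.cons 0 v') i.succ b
        have h1 := hf (Fin.cons 1 v') i.succ b
        rw [← Fin.cons_update] at h0 h1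
        have : g (Function.update v' i b) - g v' =
            ((f (Fin.cons 0 (Function.update v' i b)) - f (Fin.cons 0 v')) +
             (f (Fin.cons 1 (Function.update v' i b)) - f (Fin.cons 1 v'))) / 2 := by
          simp [hg]; ring
        rw [this]
        calc |_ / 2| ≤ (|f (Fin.cons 0 (Function.update v' i b)) - f (Fin.cons 0 v')| +
              |f (Fin.cons 1 (Function.update v' i b)) - f (Fin.cons 1 v')|) / 2 := by
              rw [abs_div, abs_two]
              exact div_le_div_of_nonneg_right (abs_add_le _ _) (by norm_num)
          _ ≤ (1 + 1) / 2 := div_le_div_of_nonneg_right (add_le_add h0 h1) (by norm_num)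
          _ = 1 := by norm_num
      -- reindex the sum
      have hsum : ∀ F : (Fin (m+1) → ZMod 2) → ℝ,
          ∑ v, F v = ∑ v' : Fin m → ZMod 2, (F (Fin.cons 0 v') + F (Fin.cons 1 v')) := by
        intro F
        rw [← (Fin.consEquiv fun _ : Fin (m+1) => ZMod 2).sum_comp F]
        rw [Fintype.sum_prod_type, Finset.sum_comm]
        congr 1; ext v'
        show ∑ b : ZMod 2, F (Fin.cons b v') = _
        rw [show (Finset.univ : Finset (ZMod 2)) = {0, 1} from by decide]
        rw [Finset.sum_insert (by decide), Finset.sum_singleton]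
      have key : ∀ v', Real.exp (L * f (Fin.cons 0 v')) + Real.exp (L * f (Fin.cons 1 v'))
          ≤ 2 * Real.exp (L ^ 2 / 8) * Real.exp (L * g v') := by
        intro v'
        set a := f (Fin.cons 0 v')
        set c := f (Fin.cons 1 v')
        set d := (a - c) / 2 with hd
        have hda : L * a = L * g v' + L * d := by simp [hg, hd]; ring
        have hdc : L * c = L * g v' + (-(L * d)) := by simp [hg, hd]; ring
        rw [hda, hdc, Real.exp_add, Real.exp_add, ← mul_add]
        have hcosh : Real.exp (L * d) + Real.exp (-(L * d)) = 2 * Real.cosh (L * d) := by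
          rw [Real.cosh_eq]; ring
        rw [hcosh]
        have h1 : Real.cosh (L * d) ≤ Real.cosh (L / 2) := by
          rw [Real.cosh_le_cosh]
          have hdle : |d| ≤ 1 / 2 := by
            rw [hd, abs_div, abs_two]
            exact div_le_div_of_nonneg_right (hdiff v') (by norm_num)
          calc |L * d| = |L| * |d| := abs_mul _ _
            _ ≤ |L| * (1 / 2) := mul_le_mul_of_nonneg_left hdle (abs_nonneg L)
            _ = |L / 2| := by rw [abs_div, abs_two]; ring
        have h2 : Real.cosh (L / 2) ≤ Real.exp (L ^ 2 / 8) := by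
          have := Real.cosh_le_exp_half_sq (L / 2)
          convert this using 2
          ring
        have hb : 2 * Real.cosh (L * d) ≤ 2 * Real.exp (L ^ 2 / 8) := by linarith
        calc Real.exp (L * g v') * (2 * Real.cosh (L * d))
            ≤ Real.exp (L * g v') * (2 * Real.exp (L ^ 2 / 8)) :=
              mul_le_mul_of_nonneg_left hb (Real.exp_nonneg _)
          _ = 2 * Real.exp (L ^ 2 / 8) * Real.exp (L * g v') := by ring
      have hsg : ∑ v', g v' = (∑ v, f v) / 2 := by
        rw [hsum f]
        simp [hg, Finset.sum_div]
      calc ∑ v, Real.exp (L * f v)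
          = ∑ v', (Real.exp (L * f (Fin.cons 0 v')) + Real.exp (L * f (Fin.cons 1 v'))) :=
            hsum _
        _ ≤ ∑ v' : Fin m → ZMod 2, 2 * Real.exp (L ^ 2 / 8) * Real.exp (L * g v') :=
            Finset.sum_le_sum fun v' _ => key v'
        _ = 2 * Real.exp (L ^ 2 / 8) * ∑ v', Real.exp (L * g v') := by
            rw [← Finset.mul_sum]
        _ ≤ 2 * Real.exp (L ^ 2 / 8) *
              (2 ^ m * Real.exp (L * ((∑ v', g v') / 2 ^ m) + L ^ 2 * m / 8)) :=
            mul_le_mul_of_nonneg_left (ih g hgl L) (by positivity)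
        _ = 2 ^ (m + 1) * (Real.exp (L ^ 2 / 8) *
              Real.exp (L * ((∑ v', g v') / 2 ^ m) + L ^ 2 * m / 8)) := by
            rw [pow_succ]; ring
        _ = 2 ^ (m + 1) * Real.exp (L * ((∑ v, f v) / 2 ^ (m + 1)) + L ^ 2 * ((m + 1 : ℕ) : ℝ) / 8) := by
            rw [hsg, ← Real.exp_add]
            congr 1
            rw [pow_succ]
            push_cast
            field_simp
            ring

lemma tail_bound (m : ℕ) (f : (Fin m → ZMod 2) → ℝ)
    (hf : ∀ v (i : Fin m) b, |f (Function.update v i b) - f v| ≤ 1)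
    (μ : ℝ) (hμ : μ = (∑ v, f v) / 2 ^ m) (t : ℝ) (ht : 0 < t) :
    ((Finset.univ.filter fun v : Fin m → ZMod 2 => t * m ≤ f v - μ).card : ℝ)
      ≤ 2 ^ m * Real.exp (-2 * m * t ^ 2) := by
  set L := 4 * t with hL
  have hL0 : 0 ≤ L := by positivity
  set S := Finset.univ.filter fun v : Fin m → ZMod 2 => t * m ≤ f v - μ with hS
  have h1 : (S.card : ℝ) * Real.exp (L * (t * m + μ)) ≤ ∑ v ∈ S, Real.exp (L * f v) := by
    rw [← nsmul_eq_mul]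
    apply Finset.card_nsmul_le_sum
    intro v hv
    rw [hS, Finset.mem_filter] at hv
    apply Real.exp_le_exp.2
    apply mul_le_mul_of_nonneg_left ?_ hL0
    linarith [hv.2]
  have h2 : ∑ v ∈ S, Real.exp (L * f v) ≤ ∑ v, Real.exp (L * f v) :=
    Finset.sum_le_sum_of_subset_of_nonneg (Finset.filter_subset _ _)
      (fun v _ _ => Real.exp_nonneg _)
  have h3 := mgf_bound m f hf L
  have h4 : (2 : ℝ) ^ m * Real.exp (L * ((∑ v, f v) / 2 ^ m) + L ^ 2 * m / 8)
      = 2 ^ m * Real.exp (-2 * m * t ^ 2) * Real.exp (L * (t * m + μ)) := by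
    rw [mul_assoc ((2:ℝ) ^ m), ← Real.exp_add]
    congr 2
    rw [← hμ, hL]
    ring
  have h5 : (S.card : ℝ) * Real.exp (L * (t * m + μ))
      ≤ 2 ^ m * Real.exp (-2 * m * t ^ 2) * Real.exp (L * (t * m + μ)) := by
    rw [← h4]; linarith
  exact le_of_mul_le_mul_right h5 (Real.exp_pos _)


/-- **Concentration.** There is a universal constant `C > 0` such that for all `m ≥ 1`, `n`,
every `B ∈ (ZMod 2)^{m×n}` and every `t > 0`, the number of `v ∈ (ZMod 2)^m` with
`|g*(v) - μ| ≥ t·m` is at most `2^{m+1}·exp(-C·m·t²)`. -/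
theorem gstar_concentration :
    ∃ C : ℝ, 0 < C ∧
      ∀ (m n : ℕ), 1 ≤ m →
        ∀ (B : Matrix (Fin m) (Fin n) (ZMod 2)) (t : ℝ), 0 < t →
          ((Finset.univ.filter fun v : Fin m → ZMod 2 =>
              t * m ≤ |gstar B v - gstarMean B|).card : ℝ)
            ≤ 2 ^ (m + 1) * Real.exp (-C * m * t ^ 2) := by
  refine ⟨2, by norm_num, ?_⟩
  intro m n hm B t ht
  set f := gstar B with hfdef
  set μ := gstarMean B with hμdef
  have hcard : (Fintype.card (Fin m → ZMod 2) : ℝ) = 2 ^ m := by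
    simp [Fintype.card_fun]
  have hmean : μ = (∑ v, f v) / 2 ^ m := by
    rw [hμdef, gstarMean, zpow_neg, zpow_natCast, inv_mul_eq_div]
  have hlip : ∀ v (i : Fin m) b, |f (Function.update v i b) - f v| ≤ 1 :=
    fun v i b => gstar_lip B v i b
  -- upper tail
  have hup := tail_bound m f hlip μ hmean t ht
  -- lower tail: apply to μ - f
  have hlip' : ∀ v (i : Fin m) b,
      |(fun v => μ - f v) (Function.update v i b) - (fun v => μ - f v) v| ≤ 1 := by
    intro v i b
    simpa [abs_sub_comm] using hlip v i b
  have hmean' : (0 : ℝ) = (∑ v, (fun v => μ - f v) v) / 2 ^ m := by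
    simp only
    rw [Finset.sum_sub_distrib, Finset.sum_const, Finset.card_univ, nsmul_eq_mul, hmean]
    field_simp [hcard]
    rw [hcard]; ring
  have hdown := tail_bound m (fun v => μ - f v) hlip' 0 hmean' t ht
  simp only [sub_zero] at hdown
  -- union bound
  have hsub : (Finset.univ.filter fun v : Fin m → ZMod 2 => t * m ≤ |f v - μ|) ⊆
      (Finset.univ.filter fun v : Fin m → ZMod 2 => t * m ≤ f v - μ) ∪
      (Finset.univ.filter fun v : Fin m → ZMod 2 => t * m ≤ μ - f v) := by
    intro v hv
    rw [Finset.mem_filter] at hv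
    rcases le_abs.1 hv.2 with h | h
    · exact Finset.mem_union_left _ (Finset.mem_filter.2 ⟨Finset.mem_univ v, h⟩)
    · exact Finset.mem_union_right _ (Finset.mem_filter.2 ⟨Finset.mem_univ v, by linarith⟩)
  have hcle : ((Finset.univ.filter fun v : Fin m → ZMod 2 => t * m ≤ |f v - μ|).card : ℝ)
      ≤ ((Finset.univ.filter fun v : Fin m → ZMod 2 => t * m ≤ f v - μ).card : ℝ)
        + ((Finset.univ.filter fun v : Fin m → ZMod 2 => t * m ≤ μ - f v).card : ℝ) := by
    have := le_trans (Finset.card_le_card hsub) (Finset.card_union_le _ _)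
    exact_mod_cast this
  calc ((Finset.univ.filter fun v : Fin m → ZMod 2 => t * m ≤ |f v - μ|).card : ℝ)
      ≤ _ + _ := hcle
    _ ≤ 2 ^ m * Real.exp (-2 * m * t ^ 2) + 2 ^ m * Real.exp (-2 * m * t ^ 2) := by
        apply add_le_add hup
        convert hdown using 3
    _ = 2 ^ (m + 1) * Real.exp (-2 * m * t ^ 2) := by rw [pow_succ]; ring
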